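/- Every totally positive integer x in a real quadratic field K can be written uniquely as x = e β_{j_0} + f β_{j_0+1} for some index j_0 ∈ ℤ and integers e ≥ 1, f ≥ 0, where (β_j)_{j∈ℤ} is the increasing sequence of indecomposable elements of O_K^+. -/

import Mathlib

open Real Filter

noncomputable def omg (D : ℕ) : ℝ := if D % 4 = 1 then (1 + Real.sqrt D) / 2 else Real.sqrt D

noncomputable def omgc (D : ℕ) : ℝ := if D % 4 = 1 then (1 - Real.sqrt D) / 2 else -Real.sqrt D

noncomputable def sigmaD (D : ℕ) : ℝ := omg D + (⌊-omgc D⌋ : ℤ)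

noncomputable def gam (D : ℕ) : ℕ → ℝ
  | 0 => sigmaD D
  | n + 1 => 1 / (gam D n - ⌊gam D n⌋)

/-- partial quotients of the continued fraction of σ_D -/
noncomputable def uD (D : ℕ) (n : ℕ) : ℤ := ⌊gam D n⌋

noncomputable def emb1 (D : ℕ) (x : ℤ × ℤ) : ℝ := (x.1 : ℝ) + (x.2 : ℝ) * omg D

noncomputable def emb2 (D : ℕ) (x : ℤ × ℤ) : ℝ := (x.1 : ℝ) + (x.2 : ℝ) * omgc D

def conjp (D : ℕ) (x : ℤ × ℤ) : ℤ × ℤ := if D % 4 = 1 then (x.1 + x.2, -x.2) else (x.1, -x.2)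

def TotPos (D : ℕ) (x : ℤ × ℤ) : Prop := 0 < emb1 D x ∧ 0 < emb2 D x

def Indec (D : ℕ) (x : ℤ × ℤ) : Prop :=
  TotPos D x ∧ ¬ ∃ y z : ℤ × ℤ, TotPos D y ∧ TotPos D z ∧ x = y + z

noncomputable def Nm (D : ℕ) (x : ℤ × ℤ) : ℝ := emb1 D x * emb2 D x

noncomputable def disc (D : ℕ) : ℝ := if D % 4 = 1 then (D : ℝ) else 4 * (D : ℝ)

def UniqDec (D : ℕ) (x : ℤ × ℤ) : Prop :=
  ∃! m : Multiset (ℤ × ℤ), (∀ y ∈ m, Indec D y) ∧ m.sum = x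

section Aux

variable {D : ℕ}

lemma sqrtD_irr (hD2 : 2 ≤ D) (hsq : Squarefree D) : Irrational (Real.sqrt D) := by
  rw [irrational_sqrt_natCast_iff]
  rintro ⟨k, hk⟩
  have hk1 : IsUnit k := hsq k (by rw [hk])
  have hk2 : k = 1 := Nat.isUnit_iff.mp hk1
  subst hk2
  simp at hk
  omega

lemma sqrtD_pos (hD2 : 2 ≤ D) : 0 < Real.sqrt D := by
  apply Real.sqrt_pos.mpr
  have : (2:ℝ) ≤ (D:ℝ) := by exact_mod_cast hD2
  linarith

lemma gapS_pos (hD2 : 2 ≤ D) : 0 < omg D - omgc D := by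
  have h := sqrtD_pos hD2
  unfold omg omgc
  split_ifs <;> linarith

lemma omgc_irr (hD2 : 2 ≤ D) (hsq : Squarefree D) : Irrational (omgc D) := by
  have h := sqrtD_irr hD2 hsq
  unfold omgc
  split_ifs
  · have h2 : Irrational ((1:ℚ) - Real.sqrt D) := h.ratCast_sub (q := 1)
    have h3 := h2.div_ratCast (q := 2) (by norm_num)
    simpa using h3
  · exact h.neg

lemma emb1_add (x y : ℤ × ℤ) : emb1 D (x + y) = emb1 D x + emb1 D y := by
  unfold emb1
  simp only [Prod.fst_add, Prod.snd_add]
  push_cast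
  ring

lemma emb2_add (x y : ℤ × ℤ) : emb2 D (x + y) = emb2 D x + emb2 D y := by
  unfold emb2
  simp only [Prod.fst_add, Prod.snd_add]
  push_cast
  ring

lemma emb1_sub (x y : ℤ × ℤ) : emb1 D (x - y) = emb1 D x - emb1 D y := by
  unfold emb1
  simp only [Prod.fst_sub, Prod.snd_sub]
  push_cast
  ring

lemma emb2_sub (x y : ℤ × ℤ) : emb2 D (x - y) = emb2 D x - emb2 D y := by
  unfold emb2
  simp only [Prod.fst_sub, Prod.snd_sub]
  push_cast
  ring

lemma emb1_smul (e : ℤ) (x : ℤ × ℤ) : emb1 D (e • x) = (e:ℝ) * emb1 D x := by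
  unfold emb1
  simp only [Prod.smul_fst, Prod.smul_snd, smul_eq_mul]
  push_cast
  ring

lemma emb2_smul (e : ℤ) (x : ℤ × ℤ) : emb2 D (e • x) = (e:ℝ) * emb2 D x := by
  unfold emb2
  simp only [Prod.smul_fst, Prod.smul_snd, smul_eq_mul]
  push_cast
  ring

lemma emb1_zero : emb1 D 0 = 0 := by simp [emb1]

lemma emb2_zero : emb2 D 0 = 0 := by simp [emb2]

lemma eq_zero_of_emb (hD2 : 2 ≤ D) (x : ℤ × ℤ) (h1 : emb1 D x = 0) (h2 : emb2 D x = 0) :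
    x = 0 := by
  have hgap := gapS_pos hD2
  have hx2 : (x.2 : ℝ) * (omg D - omgc D) = 0 := by
    unfold emb1 at h1; unfold emb2 at h2; ring_nf; nlinarith [h1, h2]
  have hx2' : (x.2 : ℝ) = 0 := by
    rcases mul_eq_zero.mp hx2 with h | h
    · exact h
    · exfalso; linarith
  have hx2'' : x.2 = 0 := by exact_mod_cast hx2'
  have hx1 : (x.1 : ℝ) = 0 := by
    unfold emb1 at h1; rw [hx2'] at h1; linarith
  have hx1' : x.1 = 0 := by exact_mod_cast hx1
  exact Prod.ext hx1' hx2''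

lemma emb2_eq_zero (hD2 : 2 ≤ D) (hsq : Squarefree D) {x : ℤ × ℤ} (h : emb2 D x = 0) :
    x = 0 := by
  by_cases hx2 : x.2 = 0
  · have hx1 : (x.1 : ℝ) = 0 := by
      unfold emb2 at h; rw [hx2] at h; push_cast at h; linarith
    have hx1' : x.1 = 0 := by exact_mod_cast hx1
    exact Prod.ext hx1' hx2
  · exfalso
    apply omgc_irr hD2 hsq
    refine ⟨(-x.1 / x.2 : ℚ), ?_⟩
    have hx2' : (x.2 : ℝ) ≠ 0 := by exact_mod_cast hx2
    unfold emb2 at h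
    push_cast
    rw [div_eq_iff hx2']
    linarith

lemma box_finite (hD2 : 2 ≤ D) (M N : ℝ) :
    {x : ℤ × ℤ | 0 < emb1 D x ∧ emb1 D x ≤ M ∧ 0 < emb2 D x ∧ emb2 D x ≤ N}.Finite := by
  have hS := gapS_pos hD2
  set S := omg D - omgc D with hSdef
  set K := max M N with hK
  set B : ℝ := K / S with hB
  set A : ℝ := K + B * |omg D| with hA
  apply Set.Finite.subset (Set.finite_Icc ((-⌈A⌉, -⌈B⌉) : ℤ × ℤ) (⌈A⌉, ⌈B⌉))
  rintro ⟨a, b⟩ ⟨h1, h2, h3, h4⟩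
  have hK1 : emb1 D (a, b) ≤ K := le_trans h2 (le_max_left _ _)
  have hK2 : emb2 D (a, b) ≤ K := le_trans h4 (le_max_right _ _)
  have hKpos : 0 < K := lt_of_lt_of_le h1 hK1
  have hdiff : (b : ℝ) * S = emb1 D (a, b) - emb2 D (a, b) := by
    unfold emb1 emb2; rw [hSdef]; ring
  have hb : |(b : ℝ)| ≤ B := by
    rw [hB, le_div_iff₀ hS, ← abs_of_pos hS, ← abs_mul, hdiff]
    rw [abs_le]
    constructor <;> linarith
  have hBpos : 0 ≤ B := le_trans (abs_nonneg _) hb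
  have ha : |(a : ℝ)| ≤ A := by
    have haeq : (a : ℝ) = emb1 D (a, b) - b * omg D := by unfold emb1; ring
    calc |(a:ℝ)| = |emb1 D (a,b) - b * omg D| := by rw [← haeq]
    _ ≤ |emb1 D (a,b)| + |(b:ℝ) * omg D| := abs_sub _ _
    _ ≤ K + B * |omg D| := by
        gcongr
        · rw [abs_of_pos h1]; exact hK1
        · rw [abs_mul]
          gcongr
  simp only [Set.mem_Icc, Prod.mk_le_mk]
  have hA1 : (a : ℝ) ≤ (⌈A⌉ : ℤ) := le_trans (le_abs_self _) (le_trans ha (Int.le_ceil A))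
  have hA2 : ((-⌈A⌉ : ℤ) : ℝ) ≤ (a : ℝ) := by
    push_cast
    have := neg_abs_le (a : ℝ)
    have := Int.le_ceil A
    linarith
  have hB1 : (b : ℝ) ≤ (⌈B⌉ : ℤ) := le_trans (le_abs_self _) (le_trans hb (Int.le_ceil B))
  have hB2 : ((-⌈B⌉ : ℤ) : ℝ) ≤ (b : ℝ) := by
    push_cast
    have := neg_abs_le (b : ℝ)
    have := Int.le_ceil B
    linarith
  exact ⟨⟨by exact_mod_cast hA2, by exact_mod_cast hB2⟩, ⟨by exact_mod_cast hA1, by exact_mod_cast hB1⟩⟩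

end Aux

set_option maxHeartbeats 4000000 in
theorem stmt8 (D : ℕ)
    (hD2 : 2 ≤ D) (hsq : Squarefree D)
    (β : ℤ → ℤ × ℤ)
    (hβind : ∀ j : ℤ, Indec D (β j))
    (hβsurj : ∀ x : ℤ × ℤ, Indec D x → ∃ j : ℤ, β j = x)
    (hβmono : StrictMono fun j : ℤ => emb1 D (β j))
    (hβ0 : β 0 = (1, 0))
 :
    ∀ x : ℤ × ℤ, TotPos D x →
      ∃! jef : ℤ × ℤ × ℤ, 1 ≤ jef.2.1 ∧ 0 ≤ jef.2.2 ∧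
        x = jef.2.1 • β jef.1 + jef.2.2 • β (jef.1 + 1) := by
  have hβinj : Function.Injective β := fun i j h =>
    hβmono.injective (congrArg (emb1 D) h)
  have hpos1 : ∀ j, 0 < emb1 D (β j) := fun j => (hβind j).1.1
  have hpos2 : ∀ j, 0 < emb2 D (β j) := fun j => (hβind j).1.2
  have hE10 : emb1 D (β 0) = 1 := by rw [hβ0]; simp [emb1]
  have hE20 : emb2 D (β 0) = 1 := by rw [hβ0]; simp [emb2]
  -- emb2 ∘ β is strictly antitone
  have hanti : StrictAnti (fun j : ℤ => emb2 D (β j)) := by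
    intro j k hjk
    show emb2 D (β k) < emb2 D (β j)
    by_contra hle
    push_neg at hle
    set d := β k - β j with hd
    have hm : emb1 D (β j) < emb1 D (β k) := hβmono hjk
    have hd1 : 0 < emb1 D d := by
      rw [hd, emb1_sub]; linarith
    have hd2 : 0 ≤ emb2 D d := by
      rw [hd, emb2_sub]; linarith
    have hd2' : 0 < emb2 D d := by
      rcases lt_or_eq_of_le hd2 with h | h
      · exact h
      · exfalso
        have : d = 0 := emb2_eq_zero hD2 hsq h.symm
        rw [this, emb1_zero] at hd1
        exact lt_irrefl _ hd1
    exact (hβind k).2 ⟨β j, d, (hβind j).1, ⟨hd1, hd2'⟩, by rw [hd]; abel⟩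
  have hanti' : ∀ {i k : ℤ}, i < k → emb2 D (β k) < emb2 D (β i) := fun h => hanti h
  have hantir : ∀ {i k : ℤ}, emb2 D (β k) < emb2 D (β i) → i < k := fun h =>
    hanti.lt_iff_gt.mp h
  have hmonor : ∀ {i k : ℤ}, emb1 D (β i) < emb1 D (β k) → i < k := fun h =>
    hβmono.lt_iff_lt.mp h
  have hlt0 : ∀ j : ℤ, j < 0 → emb1 D (β j) < 1 := by
    intro j hj
    have h : emb1 D (β j) < emb1 D (β 0) := hβmono hj
    rwa [hE10] at h
  have hgt0 : ∀ j : ℤ, 0 < j → emb2 D (β j) < 1 := by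
    intro j hj
    have h : emb2 D (β j) < emb2 D (β 0) := hanti' hj
    rwa [hE20] at h
  -- unboundedness in both directions
  have unb1 : ∀ M : ℝ, ∃ j : ℤ, 1 ≤ j ∧ M < emb1 D (β j) := by
    intro M
    by_contra hcon
    push_neg at hcon
    have hsub : Set.Ici (1:ℤ) ⊆
        β ⁻¹' {w | 0 < emb1 D w ∧ emb1 D w ≤ M ∧ 0 < emb2 D w ∧ emb2 D w ≤ 1} := by
      intro j hj
      have hj1 : (1:ℤ) ≤ j := hj
      exact ⟨hpos1 j, hcon j hj1, hpos2 j, (hgt0 j (by omega)).le⟩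
    have hfin := (box_finite hD2 M 1).preimage (Function.Injective.injOn hβinj)
    exact (Set.Ici_infinite (1:ℤ)) (hfin.subset hsub)
  have unb2 : ∀ M : ℝ, ∃ j : ℤ, j ≤ -1 ∧ M < emb2 D (β j) := by
    intro M
    by_contra hcon
    push_neg at hcon
    have hsub : Set.Iic (-1:ℤ) ⊆
        β ⁻¹' {w | 0 < emb1 D w ∧ emb1 D w ≤ 1 ∧ 0 < emb2 D w ∧ emb2 D w ≤ M} := by
      intro j hj
      have hj1 : j ≤ (-1:ℤ) := hj
      exact ⟨hpos1 j, (hlt0 j (by omega)).le, hpos2 j, hcon j hj1⟩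
    have hfin := (box_finite hD2 1 M).preimage (Function.Injective.injOn hβinj)
    exact (Set.Iic_infinite (-1:ℤ)) (hfin.subset hsub)
  -- sums over multisets
  have emb1_msum : ∀ m : Multiset (ℤ × ℤ), emb1 D m.sum = (m.map (emb1 D)).sum := by
    intro m
    induction m using Multiset.induction_on with
    | empty => simp [emb1_zero]
    | cons a s ih => simp [emb1_add, ih]
  have emb2_msum : ∀ m : Multiset (ℤ × ℤ), emb2 D m.sum = (m.map (emb2 D)).sum := by
    intro m
    induction m using Multiset.induction_on with
    | empty => simp [emb2_zero]
    | cons a s ih => simp [emb2_add, ih]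
  have mem_le_sum1 : ∀ (m : Multiset (ℤ × ℤ)), (∀ y ∈ m, TotPos D y) →
      ∀ y ∈ m, emb1 D y ≤ emb1 D m.sum := by
    intro m hm y hy
    obtain ⟨m', rfl⟩ := Multiset.exists_cons_of_mem hy
    rw [Multiset.sum_cons, emb1_add]
    have h0 : 0 ≤ emb1 D m'.sum := by
      rw [emb1_msum]
      apply Multiset.sum_nonneg
      intro a ha
      obtain ⟨b, hb, rfl⟩ := Multiset.mem_map.mp ha
      exact (hm b (Multiset.mem_cons_of_mem hb)).1.le
    linarith
  have mem_le_sum2 : ∀ (m : Multiset (ℤ × ℤ)), (∀ y ∈ m, TotPos D y) →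
      ∀ y ∈ m, emb2 D y ≤ emb2 D m.sum := by
    intro m hm y hy
    obtain ⟨m', rfl⟩ := Multiset.exists_cons_of_mem hy
    rw [Multiset.sum_cons, emb2_add]
    have h0 : 0 ≤ emb2 D m'.sum := by
      rw [emb2_msum]
      apply Multiset.sum_nonneg
      intro a ha
      obtain ⟨b, hb, rfl⟩ := Multiset.mem_map.mp ha
      exact (hm b (Multiset.mem_cons_of_mem hb)).2.le
    linarith
  -- decomposition into indecomposables
  have lemB : ∀ n : ℕ, ∀ w : ℤ × ℤ, TotPos D w →
      {v | TotPos D v ∧ emb1 D v < emb1 D w ∧ emb2 D v < emb2 D w}.ncard = n →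
      ∃ m : Multiset (ℤ × ℤ), m ≠ 0 ∧ (∀ y ∈ m, Indec D y) ∧ m.sum = w := by
    intro n
    induction n using Nat.strong_induction_on with
    | _ n ih =>
      intro w hw hn
      by_cases hi : Indec D w
      · exact ⟨{w}, by simp, by intro y hy; rw [Multiset.mem_singleton.mp hy]; exact hi, by simp⟩
      · have hdec : ∃ y z, TotPos D y ∧ TotPos D z ∧ w = y + z := by
          by_contra h
          exact hi ⟨hw, h⟩
        obtain ⟨y, z, hy, hz, hyz⟩ := hdec
        have hwfin : {v | TotPos D v ∧ emb1 D v < emb1 D w ∧ emb2 D v < emb2 D w}.Finite := by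
          apply (box_finite hD2 (emb1 D w) (emb2 D w)).subset
          rintro v ⟨hv, h1, h2⟩
          exact ⟨hv.1, h1.le, hv.2, h2.le⟩
        have hy1 : emb1 D y < emb1 D w := by rw [hyz, emb1_add]; linarith [hz.1]
        have hy2 : emb2 D y < emb2 D w := by rw [hyz, emb2_add]; linarith [hz.2]
        have hz1 : emb1 D z < emb1 D w := by rw [hyz, emb1_add]; linarith [hy.1]
        have hz2 : emb2 D z < emb2 D w := by rw [hyz, emb2_add]; linarith [hy.2]
        have hsubY : {v | TotPos D v ∧ emb1 D v < emb1 D y ∧ emb2 D v < emb2 D y} ⊂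
            {v | TotPos D v ∧ emb1 D v < emb1 D w ∧ emb2 D v < emb2 D w} := by
          constructor
          · rintro v ⟨hv, a1, a2⟩
            exact ⟨hv, a1.trans hy1, a2.trans hy2⟩
          · intro hcon
            have := hcon ⟨hy, hy1, hy2⟩
            exact lt_irrefl _ this.2.1
        have hsubZ : {v | TotPos D v ∧ emb1 D v < emb1 D z ∧ emb2 D v < emb2 D z} ⊂
            {v | TotPos D v ∧ emb1 D v < emb1 D w ∧ emb2 D v < emb2 D w} := by
          constructor
          · rintro v ⟨hv, a1, a2⟩
            exact ⟨hv, a1.trans hz1, a2.trans hz2⟩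
          · intro hcon
            have := hcon ⟨hz, hz1, hz2⟩
            exact lt_irrefl _ this.2.1
        have hyC : {v | TotPos D v ∧ emb1 D v < emb1 D y ∧ emb2 D v < emb2 D y}.ncard < n := by
          rw [← hn]; exact Set.ncard_lt_ncard hsubY hwfin
        have hzC : {v | TotPos D v ∧ emb1 D v < emb1 D z ∧ emb2 D v < emb2 D z}.ncard < n := by
          rw [← hn]; exact Set.ncard_lt_ncard hsubZ hwfin
        obtain ⟨my, hmy0, hmyI, hmyS⟩ := ih _ hyC y hy rfl
        obtain ⟨mz, hmz0, hmzI, hmzS⟩ := ih _ hzC z hz rfl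
        refine ⟨my + mz, ?_, ?_, ?_⟩
        · obtain ⟨a, ha⟩ := Multiset.exists_mem_of_ne_zero hmy0
          intro h0
          have : a ∈ my + mz := Multiset.mem_add.mpr (Or.inl ha)
          rw [h0] at this
          exact Multiset.notMem_zero a this
        · intro u hu
          rcases Multiset.mem_add.mp hu with h | h
          · exact hmyI u h
          · exact hmzI u h
        · rw [Multiset.sum_add, hmyS, hmzS, hyz]
  have lemB' : ∀ w, TotPos D w →
      ∃ m : Multiset (ℤ × ℤ), m ≠ 0 ∧ (∀ y ∈ m, Indec D y) ∧ m.sum = w :=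
    fun w hw => lemB _ w hw rfl
  -- the gap lemma
  have gap : ∀ (j : ℤ) (w : ℤ × ℤ), TotPos D w → emb1 D w < emb1 D (β (j+1)) →
      emb2 D w < emb2 D (β j) → False := by
    intro j w hw h1 h2
    obtain ⟨m, hm0, hmI, hms⟩ := lemB' w hw
    obtain ⟨y, hy⟩ := Multiset.exists_mem_of_ne_zero hm0
    have hmt : ∀ u ∈ m, TotPos D u := fun u hu => (hmI u hu).1
    obtain ⟨k, hk⟩ := hβsurj y (hmI y hy)
    have l1 : emb1 D (β k) ≤ emb1 D w := by
      rw [hk, ← hms]; exact mem_le_sum1 m hmt y hy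
    have l2 : emb2 D (β k) ≤ emb2 D w := by
      rw [hk, ← hms]; exact mem_le_sum2 m hmt y hy
    have c1 : k < j + 1 := hmonor (lt_of_le_of_lt l1 h1)
    have c2 : j < k := hantir (lt_of_le_of_lt l2 h2)
    omega
  -- cross inequality for slopes
  have cross : ∀ i k : ℤ, i < k →
      emb2 D (β k) * emb1 D (β i) < emb2 D (β i) * emb1 D (β k) := by
    intro i k hik
    have h1 : emb1 D (β i) < emb1 D (β k) := hβmono hik
    have h2 : emb2 D (β k) < emb2 D (β i) := hanti' hik
    have m1 : emb2 D (β k) * emb1 D (β i) < emb2 D (β k) * emb1 D (β k) :=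
      mul_lt_mul_of_pos_left h1 (hpos2 k)
    have m2 : emb2 D (β k) * emb1 D (β k) < emb2 D (β i) * emb1 D (β k) :=
      mul_lt_mul_of_pos_right h2 (hpos1 k)
    linarith
  intro x hx
  have hu : 0 < emb1 D x := hx.1
  have hv : 0 < emb2 D x := hx.2
  -- the predicate "slope of x at most slope of β j", cross-multiplied
  have Pmono : ∀ i k : ℤ, i ≤ k →
      emb2 D x * emb1 D (β k) ≤ emb1 D x * emb2 D (β k) →
      emb2 D x * emb1 D (β i) ≤ emb1 D x * emb2 D (β i) := by
    intro i k hik hPk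
    rcases lt_or_eq_of_le hik with h | h
    · have hint1 := mul_le_mul_of_nonneg_right hPk (hpos1 i).le
      have hint2 := mul_lt_mul_of_pos_left (cross i k h) hu
      have h1 : emb2 D x * emb1 D (β i) * emb1 D (β k) <
          emb1 D x * emb2 D (β i) * emb1 D (β k) := by nlinarith
      have := (mul_lt_mul_iff_left₀ (hpos1 k)).mp h1
      linarith
    · rw [← h] at hPk; exact hPk
  -- existence of some j satisfying P
  have hinh : ∃ j : ℤ, emb2 D x * emb1 D (β j) ≤ emb1 D x * emb2 D (β j) := by
    obtain ⟨j, hj1, hj2⟩ := unb2 (emb2 D x / emb1 D x)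
    refine ⟨j, ?_⟩
    have hb1 : emb1 D (β j) < 1 := hlt0 j (by omega)
    have k1 : emb2 D x * emb1 D (β j) < emb2 D x * 1 := mul_lt_mul_of_pos_left hb1 hv
    have k2 : emb2 D x < emb2 D (β j) * emb1 D x := by
      have := (div_lt_iff₀ hu).mp hj2
      linarith
    nlinarith
  -- boundedness of P
  have hbdd : ∃ b : ℤ, ∀ z : ℤ,
      emb2 D x * emb1 D (β z) ≤ emb1 D x * emb2 D (β z) → z ≤ b := by
    obtain ⟨J, hJ1, hJ2⟩ := unb1 (emb1 D x / emb2 D x)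
    refine ⟨J, fun z hz => ?_⟩
    by_contra hzJ
    push_neg at hzJ
    have hPJ := Pmono J z hzJ.le hz
    have hb2 : emb2 D (β J) < 1 := hgt0 J (by omega)
    have k1 : emb1 D x * emb2 D (β J) < emb1 D x * 1 := mul_lt_mul_of_pos_left hb2 hu
    have k2 : emb1 D x < emb1 D (β J) * emb2 D x := by
      have := (div_lt_iff₀ hv).mp hJ2
      linarith
    nlinarith
  obtain ⟨j0, hPj0, hmax⟩ := Int.exists_greatest_of_bdd hbdd hinh
  have hnPj01 : emb1 D x * emb2 D (β (j0+1)) < emb2 D x * emb1 D (β (j0+1)) := by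
    by_contra h
    push_neg at h
    have := hmax _ h
    omega
  -- notation
  have hpq : emb1 D (β j0) < emb1 D (β (j0+1)) := hβmono (by omega)
  have hqs : emb2 D (β (j0+1)) < emb2 D (β j0) := hanti' (by omega)
  set p := emb1 D (β j0) with hpdef
  set q := emb2 D (β j0) with hqdef
  set r := emb1 D (β (j0+1)) with hrdef
  set s := emb2 D (β (j0+1)) with hsdef
  have hp : 0 < p := hpos1 j0
  have hq : 0 < q := hpos2 j0
  have hr : 0 < r := hpos1 (j0+1)
  have hs : 0 < s := hpos2 (j0+1)
  have dpos : 0 < r * q - p * s := by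
    have m1 : p * s < r * s := mul_lt_mul_of_pos_right hpq hs
    have m2 : r * s < r * q := mul_lt_mul_of_pos_left hqs hr
    linarith
  set al : ℝ := (emb2 D x * r - emb1 D x * s) / (r * q - p * s) with haldef
  set ga : ℝ := (emb1 D x * q - emb2 D x * p) / (r * q - p * s) with hgadef
  have hal : al * p + ga * r = emb1 D x := by
    rw [haldef, hgadef]
    have hd := dpos.ne'
    rw [div_mul_eq_mul_div, div_mul_eq_mul_div, ← add_div, div_eq_iff hd]
    ring
  have hga : al * q + ga * s = emb2 D x := by
    rw [haldef, hgadef]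
    have hd := dpos.ne'
    rw [div_mul_eq_mul_div, div_mul_eq_mul_div, ← add_div, div_eq_iff hd]
    ring
  have hal_pos : 0 < al := div_pos (by linarith) dpos
  have hga_nonneg : 0 ≤ ga := div_nonneg (by linarith) dpos.le
  set a := ⌊al⌋ with hadef
  set c := ⌊ga⌋ with hcdef
  set t : ℝ := al - (a : ℝ) with htdef
  set g : ℝ := ga - (c : ℝ) with hgdef
  have ht0 : 0 ≤ t := by rw [htdef]; linarith [Int.floor_le al]
  have ht1 : t < 1 := by rw [htdef]; linarith [Int.lt_floor_add_one al]
  have hg0 : 0 ≤ g := by rw [hgdef]; linarith [Int.floor_le ga]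
  have hg1 : g < 1 := by rw [hgdef]; linarith [Int.lt_floor_add_one ga]
  set w : ℤ × ℤ := x - a • β j0 - c • β (j0+1) with hwdef
  have hw1 : emb1 D w = t * p + g * r := by
    rw [hwdef, emb1_sub, emb1_sub, emb1_smul, emb1_smul, ← hal, htdef, hgdef]
    ring
  have hw2 : emb2 D w = t * q + g * s := by
    rw [hwdef, emb2_sub, emb2_sub, emb2_smul, emb2_smul, ← hga, htdef, hgdef]
    ring
  have key : t = 0 ∧ g = 0 := by
    by_contra hcon
    rcases le_or_gt (t + g) 1 with hle | hgt
    · rcases eq_or_lt_of_le ht0 with ht | ht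
      · rcases eq_or_lt_of_le hg0 with hg | hg
        · exact hcon ⟨ht.symm, hg.symm⟩
        · -- t = 0, 0 < g < 1 : β (j0+1) decomposable
          have hwT : TotPos D w := by
            constructor
            · rw [hw1, ← ht]; nlinarith
            · rw [hw2, ← ht]; nlinarith
          have hzwT : TotPos D (β (j0+1) - w) := by
            constructor
            · rw [emb1_sub, hw1, ← ht]; nlinarith
            · rw [emb2_sub, hw2, ← ht]; nlinarith
          exact (hβind (j0+1)).2 ⟨w, β (j0+1) - w, hwT, hzwT, by abel⟩
      · rcases eq_or_lt_of_le hg0 with hg | hg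
        · -- g = 0, 0 < t < 1 : β j0 decomposable
          have hwT : TotPos D w := by
            constructor
            · rw [hw1, ← hg]; nlinarith
            · rw [hw2, ← hg]; nlinarith
          have hzwT : TotPos D (β j0 - w) := by
            constructor
            · rw [emb1_sub, hw1, ← hg]; nlinarith
            · rw [emb2_sub, hw2, ← hg]; nlinarith
          exact (hβind j0).2 ⟨w, β j0 - w, hwT, hzwT, by abel⟩
        · -- both positive : gap
          have hwT : TotPos D w := by
            constructor
            · rw [hw1]; nlinarith
            · rw [hw2]; nlinarith
          apply gap j0 w hwT
          · rw [hw1]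
            have m1 : t * p < t * r := mul_lt_mul_of_pos_left hpq ht
            have m2 : (t + g) * r ≤ 1 * r := mul_le_mul_of_nonneg_right hle hr.le
            nlinarith
          · rw [hw2]
            have m1 : g * s < g * q := mul_lt_mul_of_pos_left hqs hg
            have m2 : (t + g) * q ≤ 1 * q := mul_le_mul_of_nonneg_right hle hq.le
            nlinarith
    · -- t + g > 1 : use w' = β j0 + β (j0+1) - w
      set w' : ℤ × ℤ := β j0 + β (j0+1) - w with hw'def
      have hw'1 : emb1 D w' = (1-t) * p + (1-g) * r := by
        rw [hw'def, emb1_sub, emb1_add, hw1]; ring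
      have hw'2 : emb2 D w' = (1-t) * q + (1-g) * s := by
        rw [hw'def, emb2_sub, emb2_add, hw2]; ring
      have ht1' : 0 < 1 - t := by linarith
      have hg1' : 0 < 1 - g := by linarith
      have hsum : (1-t) + (1-g) < 1 := by linarith
      have hwT : TotPos D w' := by
        constructor
        · rw [hw'1]; nlinarith
        · rw [hw'2]; nlinarith
      apply gap j0 w' hwT
      · rw [hw'1]
        have m1 : (1-t) * p < (1-t) * r := mul_lt_mul_of_pos_left hpq ht1'
        have m2 : ((1-t) + (1-g)) * r ≤ 1 * r := mul_le_mul_of_nonneg_right hsum.le hr.le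
        nlinarith
      · rw [hw'2]
        have m1 : (1-g) * s < (1-g) * q := mul_lt_mul_of_pos_left hqs hg1'
        have m2 : ((1-t) + (1-g)) * q ≤ 1 * q := mul_le_mul_of_nonneg_right hsum.le hq.le
        nlinarith
  obtain ⟨ht, hg⟩ := key
  have hwzero : w = 0 := by
    apply eq_zero_of_emb hD2
    · rw [hw1, ht, hg]; ring
    · rw [hw2, ht, hg]; ring
  have hxeq : x = a • β j0 + c • β (j0+1) := by
    have h := hwzero
    rw [hwdef, sub_sub, sub_eq_zero] at h
    exact h
  have hala : al = (a : ℝ) := by rw [htdef] at ht; linarith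
  have hgac : ga = (c : ℝ) := by rw [hgdef] at hg; linarith
  have ha1 : 1 ≤ a := by
    have h1 : (0:ℝ) < (a:ℝ) := by rw [← hala]; exact hal_pos
    have h2 : 0 < a := by exact_mod_cast h1
    omega
  have hc0 : 0 ≤ c := by
    have h1 : (0:ℝ) ≤ (c:ℝ) := by rw [← hgac]; exact hga_nonneg
    exact_mod_cast h1
  refine ⟨(j0, a, c), ⟨ha1, hc0, hxeq⟩, ?_⟩
  rintro ⟨k, e, f⟩ ⟨he, hf, heq⟩
  simp only at he hf heq
  -- derive the slope bounds for k
  have hu' : emb1 D x = (e:ℝ) * emb1 D (β k) + (f:ℝ) * emb1 D (β (k+1)) := by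
    rw [heq, emb1_add, emb1_smul, emb1_smul]
  have hv' : emb2 D x = (e:ℝ) * emb2 D (β k) + (f:ℝ) * emb2 D (β (k+1)) := by
    rw [heq, emb2_add, emb2_smul, emb2_smul]
  have he1 : (1:ℝ) ≤ (e:ℝ) := by exact_mod_cast he
  have hf0 : (0:ℝ) ≤ (f:ℝ) := by exact_mod_cast hf
  have hcrossk := cross k (k+1) (by omega)
  have hPk : emb2 D x * emb1 D (β k) ≤ emb1 D x * emb2 D (β k) := by
    rw [hu', hv']
    have hint := mul_le_mul_of_nonneg_left hcrossk.le hf0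
    nlinarith
  have hnPk1 : emb1 D x * emb2 D (β (k+1)) < emb2 D x * emb1 D (β (k+1)) := by
    rw [hu', hv']
    have hepos : (0:ℝ) < (e:ℝ) := by linarith
    have hint := mul_lt_mul_of_pos_left hcrossk hepos
    nlinarith
  have hkj : k = j0 := by
    by_contra hne
    rcases lt_or_gt_of_ne hne with h | h
    · have hk1 : k + 1 ≤ j0 := by omega
      have := Pmono (k+1) j0 hk1 hPj0
      linarith
    · have hk1 : j0 + 1 ≤ k := by omega
      have := Pmono (j0+1) k hk1 hPk
      linarith
  subst hkj
  -- now identify coefficients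
  have E1 : (e:ℝ) * p + (f:ℝ) * r = (a:ℝ) * p + (c:ℝ) * r := by
    have h2 : emb1 D x = (a:ℝ) * p + (c:ℝ) * r := by
      rw [hxeq, emb1_add, emb1_smul, emb1_smul]
    rw [← hpdef, ← hrdef] at hu'
    linarith [hu', h2]
  have E2 : (e:ℝ) * q + (f:ℝ) * s = (a:ℝ) * q + (c:ℝ) * s := by
    have h2 : emb2 D x = (a:ℝ) * q + (c:ℝ) * s := by
      rw [hxeq, emb2_add, emb2_smul, emb2_smul]
    rw [← hqdef, ← hsdef] at hv'
    linarith [hv', h2]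
  have hX : ((e:ℝ) - a) * p = ((c:ℝ) - f) * r := by linarith
  have hY : ((e:ℝ) - a) * q = ((c:ℝ) - f) * s := by linarith
  have h0 : ((e:ℝ) - a) * (r * q - p * s) = 0 := by
    linear_combination r * hY - s * hX
  have hXz : (e:ℝ) - (a:ℝ) = 0 := by
    rcases mul_eq_zero.mp h0 with h | h
    · exact h
    · exfalso; linarith
  have hYz : (c:ℝ) - (f:ℝ) = 0 := by
    have h1 : ((c:ℝ) - f) * r = 0 := by rw [← hX, hXz]; ring
    rcases mul_eq_zero.mp h1 with h | h
    · exact h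
    · exfalso; linarith
  have hea : e = a := by
    have h1 : (e:ℝ) = (a:ℝ) := by linarith
    exact_mod_cast h1
  have hfc : f = c := by
    have h1 : (f:ℝ) = (c:ℝ) := by linarith
    exact_mod_cast h1
  rw [hea, hfc]
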